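/- arXiv:1609.04587 — 2 statements merged into one kernel-verified Lean document; each statement's English description precedes it below -/
import Mathlib

section
/- Normalization integral: if λ is a positive zero of J_0, then ∫_0^1 x J_0(λ x)² dx = J_1(λ)²/2. -/
/-- Bessel function of the first kind of natural order `n`. -/
noncomputable def besselJN (n : ℕ) (x : ℝ) : ℝ :=
  ∑' m : ℕ, ((-1) ^ m / (m.factorial * (m + n).factorial)) * (x / 2) ^ (2 * m + n)

lemma besselJN_summable (n : ℕ) (x : ℝ) :
    Summable (fun m : ℕ => ((-1:ℝ) ^ m / (m.factorial * (m + n).factorial)) * (x / 2) ^ (2 * m + n)) := by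
  have hs : Summable (fun m : ℕ => |x/2| ^ n * ((|x/2| ^ 2) ^ m / m.factorial)) :=
    (Real.summable_pow_div_factorial (|x/2| ^ 2)).mul_left _
  refine Summable.of_norm_bounded hs (fun m => ?_)
  have hf1 : (1:ℝ) ≤ (m.factorial : ℝ) := by exact_mod_cast m.factorial_pos
  have hf2 : (1:ℝ) ≤ ((m+n).factorial : ℝ) := by exact_mod_cast (m+n).factorial_pos
  have h : ‖((-1:ℝ) ^ m / (m.factorial * (m + n).factorial)) * (x / 2) ^ (2 * m + n)‖
      = |x/2| ^ (2*m+n) / ((m.factorial : ℝ) * (m+n).factorial) := by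
    rw [Real.norm_eq_abs, abs_mul, abs_div, abs_pow, abs_pow, abs_neg, abs_one, one_pow,
      abs_mul, Nat.abs_cast, Nat.abs_cast]
    ring
  rw [h, pow_add, pow_mul]
  calc (|x/2|^2)^m * |x/2|^n / ((m.factorial:ℝ) * (m+n).factorial)
      ≤ (|x/2|^2)^m * |x/2|^n / ((m.factorial:ℝ) * 1) := by
        apply div_le_div_of_nonneg_left (by positivity) (by positivity)
        nlinarith
    _ = |x/2|^n * ((|x/2|^2)^m / m.factorial) := by ring

lemma besselJN_zero_eq (x : ℝ) :
    besselJN 0 x = ∑' m : ℕ, ((-1:ℝ) ^ m / (m.factorial * m.factorial)) * (x / 2) ^ (2 * m) := by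
  simp [besselJN]

lemma besselJN_one_eq (x : ℝ) :
    besselJN 1 x = ∑' m : ℕ, ((-1:ℝ) ^ m / (m.factorial * (m+1).factorial)) * (x / 2) ^ (2 * m + 1) :=
  rfl

/-- J₀' = -J₁ -/
lemma hasDerivAt_besselJ0 (y : ℝ) :
    HasDerivAt (besselJN 0) (-(besselJN 1 y)) y := by
  set R : ℝ := |y| + 1 with hR
  have hM1 : (1:ℝ) ≤ max 1 (R/2) := le_max_left _ _
  set M : ℝ := max 1 (R/2) with hM
  have hM0 : (0:ℝ) ≤ M := by linarith
  have hy : y ∈ Metric.ball (0:ℝ) R := by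
    simp only [Metric.mem_ball, Real.dist_eq, sub_zero, hR]; linarith
  set g : ℕ → ℝ → ℝ := fun m x => ((-1:ℝ) ^ m / (m.factorial * m.factorial)) * (x / 2) ^ (2 * m) with hg_def
  set g' : ℕ → ℝ → ℝ := fun m x =>
    ((-1:ℝ) ^ m / (m.factorial * m.factorial)) * (((2*m : ℕ):ℝ) * (x / 2) ^ (2 * m - 1) * (1/2)) with hg'_def
  set u : ℕ → ℝ := fun m => (2 * M^2) ^ m / m.factorial with hu_def
  have hu : Summable u := Real.summable_pow_div_factorial _
  have hderiv : ∀ (m : ℕ) (x : ℝ), HasDerivAt (g m) (g' m x) x := by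
    intro m x
    have h := (((hasDerivAt_id x).div_const 2).pow (2*m)).const_mul
      ((-1:ℝ)^m / (m.factorial * m.factorial))
    simpa [hg_def, hg'_def] using h
  have hbound : ∀ (m : ℕ) (x : ℝ), x ∈ Metric.ball (0:ℝ) R → ‖g' m x‖ ≤ u m := by
    intro m x hx
    have hxR : |x| < R := by simpa [Real.dist_eq] using hx
    have hx2 : |x/2| ≤ M := by
      rw [abs_div]
      calc |x| / |(2:ℝ)| ≤ R / 2 := by rw [abs_two]; linarith
        _ ≤ M := le_max_right _ _
    have hf1 : (1:ℝ) ≤ (m.factorial : ℝ) := by exact_mod_cast m.factorial_pos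
    have hm2 : (m:ℝ) ≤ 2^m := by exact_mod_cast (Nat.lt_two_pow_self (n := m)).le
    have h1 : ‖g' m x‖ = (m:ℝ) / ((m.factorial:ℝ) * m.factorial) * |x/2| ^ (2*m-1) := by
      simp only [hg'_def, Real.norm_eq_abs, abs_mul, abs_div, abs_pow, abs_neg, abs_one,
        one_pow, Nat.abs_cast, abs_two]
      push_cast
      ring
    rw [h1, hu_def]
    have hpow : |x/2| ^ (2*m-1) ≤ M ^ (2*m) :=
      (pow_le_pow_left₀ (abs_nonneg _) hx2 _).trans (pow_le_pow_right₀ hM1 (by omega))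
    have h2 : (m:ℝ) / ((m.factorial:ℝ) * m.factorial) ≤ 2^m / m.factorial := by
      rw [div_le_div_iff₀ (by positivity) (by positivity)]
      have e1 : (m:ℝ) * m.factorial ≤ 2^m * m.factorial :=
        mul_le_mul_of_nonneg_right hm2 (by positivity)
      have e2 : (2:ℝ)^m * m.factorial * 1 ≤ 2^m * m.factorial * m.factorial :=
        mul_le_mul_of_nonneg_left hf1 (by positivity)
      nlinarith [e1, e2]
    calc (m:ℝ) / ((m.factorial:ℝ) * m.factorial) * |x/2| ^ (2*m-1)
        ≤ 2^m / m.factorial * M ^ (2*m) :=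
          mul_le_mul h2 hpow (by positivity) (by positivity)
      _ = (2 * M^2) ^ m / m.factorial := by
          rw [mul_pow, pow_mul]; ring
  have hg0 : Summable (fun m => g m 0) := by
    simp only [hg_def]
    simpa using besselJN_summable 0 0
  have key := hasDerivAt_tsum_of_isPreconnected hu Metric.isOpen_ball
    (convex_ball (0:ℝ) R).isPreconnected (fun m z _ => hderiv m z) hbound
    (Metric.mem_ball_self (by positivity)) hg0 hy
  have hfun : (fun z => ∑' m, g m z) = besselJN 0 := by
    funext z; rw [besselJN_zero_eq]
  have hsum' : Summable (fun m => g' m y) :=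
    hu.of_norm_bounded (fun m => hbound m y hy)
  have hval : (∑' m, g' m y) = -(besselJN 1 y) := by
    rw [Summable.tsum_eq_zero_add hsum']
    have h0 : g' 0 y = 0 := by simp [hg'_def]
    rw [h0, zero_add, besselJN_one_eq, ← tsum_neg]
    congr 1
    funext k
    have hk1 : (k.factorial : ℝ) ≠ 0 := by positivity
    have hk2 : ((k+1).factorial : ℝ) ≠ 0 := by positivity
    simp only [hg'_def]
    have he : 2*(k+1)-1 = 2*k+1 := by omega
    rw [he, Nat.factorial_succ (k)]
    push_cast
    rw [pow_succ]
    field_simp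
  rw [hfun, hval] at key
  exact key

/-- (y J₁(y))' = y J₀(y) -/
lemma hasDerivAt_mul_besselJ1 (y : ℝ) :
    HasDerivAt (fun t => t * besselJN 1 t) (y * besselJN 0 y) y := by
  set R : ℝ := |y| + 1 with hR
  have hM1 : (1:ℝ) ≤ max 1 (R/2) := le_max_left _ _
  set M : ℝ := max 1 (R/2) with hM
  have hM0 : (0:ℝ) ≤ M := by linarith
  have hy : y ∈ Metric.ball (0:ℝ) R := by
    simp only [Metric.mem_ball, Real.dist_eq, sub_zero, hR]; linarith
  set g : ℕ → ℝ → ℝ := fun m x =>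
    ((-1:ℝ) ^ m / (m.factorial * (m+1).factorial)) * 2 * (x / 2) ^ (2 * m + 2) with hg_def
  set g' : ℕ → ℝ → ℝ := fun m x =>
    ((-1:ℝ) ^ m / (m.factorial * (m+1).factorial)) * 2 *
      (((2*m+2 : ℕ):ℝ) * (x / 2) ^ (2 * m + 1) * (1/2)) with hg'_def
  set u : ℕ → ℝ := fun m => (2*M^2) * (2 * M^2) ^ m / m.factorial with hu_def
  have hu : Summable u := by
    have := (Real.summable_pow_div_factorial (2*M^2)).mul_left (2*M^2)
    simpa [hu_def, mul_div_assoc] using this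
  have hderiv : ∀ (m : ℕ) (x : ℝ), HasDerivAt (g m) (g' m x) x := by
    intro m x
    have h := (((hasDerivAt_id x).div_const 2).pow (2*m+2)).const_mul
      (((-1:ℝ)^m / (m.factorial * (m+1).factorial)) * 2)
    have he : 2*m+2-1 = 2*m+1 := by omega
    rw [he] at h
    simpa [hg_def, hg'_def] using h
  have hbound : ∀ (m : ℕ) (x : ℝ), x ∈ Metric.ball (0:ℝ) R → ‖g' m x‖ ≤ u m := by
    intro m x hx
    have hxR : |x| < R := by simpa [Real.dist_eq] using hx
    have hx2 : |x/2| ≤ M := by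
      rw [abs_div]
      calc |x| / |(2:ℝ)| ≤ R / 2 := by rw [abs_two]; linarith
        _ ≤ M := le_max_right _ _
    have hf1 : (1:ℝ) ≤ (m.factorial : ℝ) := by exact_mod_cast m.factorial_pos
    have hf2 : (1:ℝ) ≤ ((m+1).factorial : ℝ) := by exact_mod_cast (m+1).factorial_pos
    have hm2 : (m:ℝ) + 1 ≤ 2^m := by exact_mod_cast Nat.succ_le_of_lt (Nat.lt_two_pow_self (n := m))
    have h1 : ‖g' m x‖ = ((2*m+2:ℕ):ℝ) / ((m.factorial:ℝ) * (m+1).factorial) * |x/2| ^ (2*m+1) := by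
      simp only [hg'_def, Real.norm_eq_abs, abs_mul, abs_div, abs_pow, abs_neg, abs_one,
        one_pow, Nat.abs_cast, abs_two]
      push_cast
      ring
    rw [h1, hu_def]
    have hpow : |x/2| ^ (2*m+1) ≤ M ^ (2*m+2) :=
      (pow_le_pow_left₀ (abs_nonneg _) hx2 _).trans (pow_le_pow_right₀ hM1 (by omega))
    have h2 : ((2*m+2:ℕ):ℝ) / ((m.factorial:ℝ) * (m+1).factorial) ≤ 2 * 2^m / m.factorial := by
      rw [div_le_div_iff₀ (by positivity) (by positivity)]
      push_cast
      have e1 : (2*(m:ℝ)+2) * m.factorial ≤ 2*2^m * m.factorial :=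
        mul_le_mul_of_nonneg_right (by linarith) (by positivity)
      have e2 : 2*(2:ℝ)^m * m.factorial * 1 ≤ 2*2^m * m.factorial * (m+1).factorial :=
        mul_le_mul_of_nonneg_left hf2 (by positivity)
      nlinarith [e1, e2]
    calc ((2*m+2:ℕ):ℝ) / ((m.factorial:ℝ) * (m+1).factorial) * |x/2| ^ (2*m+1)
        ≤ 2 * 2^m / m.factorial * M ^ (2*m+2) :=
          mul_le_mul h2 hpow (by positivity) (by positivity)
      _ = (2*M^2) * (2 * M^2) ^ m / m.factorial := by
          rw [mul_pow, pow_add, pow_mul]; ring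
  have hg0 : Summable (fun m => g m 0) := by
    simp only [hg_def]
    apply Summable.of_norm_bounded hu
    intro m
    simp [hu_def]
    positivity
  have key := hasDerivAt_tsum_of_isPreconnected hu Metric.isOpen_ball
    (convex_ball (0:ℝ) R).isPreconnected (fun m z _ => hderiv m z) hbound
    (Metric.mem_ball_self (by positivity)) hg0 hy
  have hfun : (fun z => ∑' m, g m z) = (fun t => t * besselJN 1 t) := by
    funext z
    rw [besselJN_one_eq, ← tsum_mul_left]
    congr 1
    funext m
    simp only [hg_def]
    rw [pow_succ]
    ring
  have hval : (∑' m, g' m y) = y * besselJN 0 y := by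
    rw [besselJN_zero_eq, ← tsum_mul_left]
    congr 1
    funext m
    have hk1 : (m.factorial : ℝ) ≠ 0 := by positivity
    have hk2 : ((m+1).factorial : ℝ) ≠ 0 := by positivity
    simp only [hg'_def]
    rw [Nat.factorial_succ m]
    push_cast
    rw [pow_succ]
    field_simp
  rw [hfun, hval] at key
  exact key

/-- Normalization: if `λ > 0` is a zero of `J₀`, then `∫_0^1 x J₀(λx)² dx = J₁(λ)²/2`. -/
theorem besselJ0_norm (l : ℝ) (hl : 0 < l) (hz : besselJN 0 l = 0) :
    ∫ x in (0:ℝ)..1, x * besselJN 0 (l * x) ^ 2 = besselJN 1 l ^ 2 / 2 := by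
  set F : ℝ → ℝ := fun x => x^2/2 * (besselJN 0 (l*x))^2 + (l*x * besselJN 1 (l*x))^2 / (2*l^2)
    with hF_def
  have hF : ∀ x : ℝ, HasDerivAt F (x * besselJN 0 (l*x)^2) x := by
    intro x
    have hg : HasDerivAt (fun t : ℝ => l * t) l x := by
      simpa using (hasDerivAt_id x).const_mul l
    have h0 : HasDerivAt (fun t : ℝ => besselJN 0 (l*t)) (-(besselJN 1 (l*x)) * l) x :=
      (hasDerivAt_besselJ0 (l*x)).comp x hg
    have h1 : HasDerivAt (fun t : ℝ => l*t * besselJN 1 (l*t)) ((l*x * besselJN 0 (l*x)) * l) x :=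
      (hasDerivAt_mul_besselJ1 (l*x)).comp x hg
    have hA : HasDerivAt (fun t : ℝ => t^2/2 * (besselJN 0 (l*t))^2)
        ((2*x/2) * (besselJN 0 (l*x))^2 + x^2/2 * (2 * besselJN 0 (l*x) * (-(besselJN 1 (l*x)) * l))) x := by
      have := ((hasDerivAt_pow 2 x).div_const 2).mul ((h0.pow 2))
      simpa [pow_one, mul_comm, Pi.mul_def, Pi.pow_def] using this
    have hB : HasDerivAt (fun t : ℝ => (l*t * besselJN 1 (l*t))^2 / (2*l^2))
        ((2 * (l*x * besselJN 1 (l*x)) * ((l*x * besselJN 0 (l*x)) * l)) / (2*l^2)) x := by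
      have := (h1.pow 2).div_const (2*l^2)
      simpa [pow_one, mul_comm] using this
    have := hA.add hB
    simp only [Pi.add_def] at this
    refine this.congr_deriv ?_
    have hl2 : (l:ℝ)^2 ≠ 0 := by positivity
    field_simp
    ring
  have hint : IntervalIntegrable (fun x => x * besselJN 0 (l*x)^2) MeasureTheory.volume 0 1 := by
    apply Continuous.intervalIntegrable
    have hd0 : Differentiable ℝ (besselJN 0) := fun y => (hasDerivAt_besselJ0 y).differentiableAt
    have hc0 : Continuous (besselJN 0) := hd0.continuous
    exact continuous_id.mul ((hc0.comp (continuous_const.mul continuous_id)).pow 2)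
  have := intervalIntegral.integral_eq_sub_of_hasDerivAt (fun x _ => hF x) hint
  rw [this]
  simp only [hF_def]
  rw [mul_zero, mul_one]
  rw [hz]
  have hl2 : (l:ℝ)^2 ≠ 0 := by positivity
  field_simp
  ring
end

section
/- Uniqueness for the inverse initial problem: suppose u is continuous on [0,1]×[0,T], has uniformly convergent Fourier-Bessel expansion u(x,t) = Σ u_k(t) J_0(λ_k x) with each u_k satisfying ^cD^α u_k + λ_k² u_k = 0 on (0,T), and u(x,T) = 0 for all x ∈ [0,1]. Then u ≡ 0 on [0,1]×[0,T] and in particular u(·,0) ≡ 0. -/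
/-- The (real) Mittag-Leffler function `E_α(x) = ∑ x^k / Γ(αk+1)`. -/
noncomputable def mlReal (a x : ℝ) : ℝ :=
  ∑' k : ℕ, x ^ k / Real.Gamma (a * k + 1)

/-- Caputo fractional derivative of order `α`. -/
noncomputable def caputo (a : ℝ) (f : ℝ → ℝ) (t : ℝ) : ℝ :=
  (1 / Real.Gamma (1 - a)) * ∫ τ in (0:ℝ)..t, deriv f τ / (t - τ) ^ a

noncomputable def aJ (m : ℕ) : ℝ := (-1) ^ m / ((m.factorial : ℝ) ^ 2 * 4 ^ m)

noncomputable def Jf (x : ℝ) : ℝ := ∑' m : ℕ, aJ m * x ^ (2 * m)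

lemma besselJN_zero_eq_s15 : besselJN 0 = Jf := by
  funext x
  unfold besselJN Jf aJ
  refine tsum_congr fun m => ?_
  have h4 : ((4 : ℝ)) ^ m = 2 ^ (2 * m) := by
    rw [pow_mul]; norm_num
  rw [h4]
  have hfac : ((m.factorial : ℝ)) ≠ 0 := Nat.cast_ne_zero.mpr m.factorial_ne_zero
  have h2 : ((2 : ℝ)) ^ (2 * m) ≠ 0 := by positivity
  field_simp [div_pow]
  ring_nf
  simp

lemma aJ_abs (m : ℕ) : |aJ m| ≤ 1 / m.factorial := by
  unfold aJ
  have hfac : (0:ℝ) < (m.factorial : ℝ) := by positivity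
  rw [abs_div, abs_pow, abs_neg, abs_one, one_pow]
  rw [abs_of_pos (by positivity : (0:ℝ) < (m.factorial:ℝ)^2 * 4 ^ m)]
  apply one_div_le_one_div_of_le hfac
  have h1 : (1:ℝ) ≤ (m.factorial : ℝ) := by exact_mod_cast m.factorial_pos
  have h2 : (1:ℝ) ≤ (4:ℝ) ^ m := one_le_pow₀ (by norm_num)
  nlinarith

lemma two_mul_le (m : ℕ) : ((2 * m : ℕ) : ℝ) ≤ 4 ^ m := by
  induction m with
  | zero => norm_num
  | succ n ih =>
    have h1 : (1:ℝ) ≤ (4:ℝ) ^ n := one_le_pow₀ (by norm_num)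
    push_cast at ih ⊢
    rw [pow_succ]
    nlinarith

/-- generic summability for series with coefficients bounded by `16^m/m!` -/
lemma summable_terms (c : ℕ → ℝ) (e : ℕ → ℕ)
    (hc : ∀ m, |c m| ≤ 16 ^ m / m.factorial) (he : ∀ m, e m ≤ 2 * m) {R : ℝ}
    (hR : 0 ≤ R) :
    Summable (fun m => (16 * (R + 1) ^ 2) ^ m / (m.factorial : ℝ)) ∧
    ∀ y : ℝ, |y| ≤ R → ∀ m, |c m * y ^ e m| ≤ (16 * (R + 1) ^ 2) ^ m / m.factorial := by
  constructor
  · exact Real.summable_pow_div_factorial _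
  · intro y hy m
    have h1 : |y| ^ (e m) ≤ (R + 1) ^ (2 * m) := by
      calc |y| ^ (e m) ≤ (R + 1) ^ (e m) := by
            apply pow_le_pow_left₀ (abs_nonneg y); linarith
        _ ≤ (R + 1) ^ (2 * m) := by
            apply pow_le_pow_right₀ (by linarith) (he m)
    have hfac : (0:ℝ) < (m.factorial : ℝ) := by positivity
    rw [abs_mul, abs_pow]
    calc |c m| * |y| ^ (e m) ≤ (16 ^ m / m.factorial) * (R + 1) ^ (2 * m) := by
          apply mul_le_mul (hc m) h1 (by positivity) (by positivity)
      _ = (16 * (R + 1) ^ 2) ^ m / m.factorial := by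
          rw [mul_pow, pow_mul]; ring

lemma summable_of_coeff (c : ℕ → ℝ) (e : ℕ → ℕ)
    (hc : ∀ m, |c m| ≤ 16 ^ m / m.factorial) (he : ∀ m, e m ≤ 2 * m) (y : ℝ) :
    Summable (fun m => c m * y ^ e m) := by
  obtain ⟨hs, hb⟩ := summable_terms c e hc he (abs_nonneg y)
  exact Summable.of_norm (hs.of_nonneg_of_le (fun m => norm_nonneg _)
    (fun m => hb y le_rfl m))

lemma coeff_bound_aJ (m : ℕ) : |aJ m| ≤ 16 ^ m / m.factorial := by
  refine (aJ_abs m).trans ?_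
  gcongr
  exact one_le_pow₀ (by norm_num)

lemma coeff_bound_gen (m : ℕ) (b : ℝ) (hb0 : 0 ≤ b) (hb : b ≤ 16 ^ m) :
    |aJ m * b| ≤ 16 ^ m / m.factorial := by
  rw [abs_mul, abs_of_nonneg hb0]
  have hfac : (0:ℝ) < (m.factorial : ℝ) := by positivity
  calc |aJ m| * b ≤ (1 / m.factorial) * 16 ^ m :=
        mul_le_mul (aJ_abs m) hb hb0 (by positivity)
    _ = 16 ^ m / m.factorial := by ring

noncomputable def D1 (x : ℝ) : ℝ := ∑' m : ℕ, (aJ m * (2 * m)) * x ^ (2 * m - 1)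

noncomputable def D2 (x : ℝ) : ℝ :=
  ∑' m : ℕ, (aJ m * (2 * m) * ((2 * m - 1 : ℕ) : ℝ)) * x ^ (2 * m - 1 - 1)

lemma c1_bound (m : ℕ) : |aJ m * (2 * m)| ≤ 16 ^ m / m.factorial := by
  apply coeff_bound_gen m _ (by positivity)
  have := two_mul_le m
  push_cast at this
  calc (2:ℝ) * m ≤ 4 ^ m := this
    _ ≤ 16 ^ m := by apply pow_le_pow_left₀ (by positivity); norm_num

lemma c2_bound (m : ℕ) :
    |aJ m * (2 * m) * ((2 * m - 1 : ℕ) : ℝ)| ≤ 16 ^ m / m.factorial := by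
  rw [mul_assoc]
  apply coeff_bound_gen m _ (by positivity)
  have h1 := two_mul_le m
  push_cast at h1
  have h2 : ((2 * m - 1 : ℕ) : ℝ) ≤ 4 ^ m := by
    calc ((2 * m - 1 : ℕ) : ℝ) ≤ ((2 * m : ℕ) : ℝ) := by
          exact_mod_cast Nat.sub_le _ _
      _ ≤ 4 ^ m := two_mul_le m
  have h3 : (0:ℝ) ≤ ((2 * m - 1 : ℕ) : ℝ) := by positivity
  calc (2:ℝ) * m * ((2 * m - 1 : ℕ) : ℝ) ≤ 4 ^ m * 4 ^ m := by
        apply mul_le_mul h1 h2 h3 (by positivity)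
    _ = 16 ^ m := by rw [← mul_pow]; norm_num

lemma hasDerivAt_Jf (x : ℝ) : HasDerivAt Jf (D1 x) x := by
  have hR : (0:ℝ) < |x| + 1 := by positivity
  unfold Jf D1
  exact hasDerivAt_tsum_of_isPreconnected
    (g := fun m y => aJ m * y ^ (2 * m))
    (g' := fun m y => (aJ m * (2 * m)) * y ^ (2 * m - 1))
    (Real.summable_pow_div_factorial (16 * (|x| + 1 + 1) ^ 2))
    Metric.isOpen_ball (convex_ball (0:ℝ) (|x|+1)).isPreconnected
    (fun m y _ => by
      have := (hasDerivAt_pow (2*m) y).const_mul (aJ m)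
      exact this.congr_deriv (by push_cast; ring))
    (fun m y hy => by
      have hyR : |y| ≤ |x| + 1 := by
        rw [Metric.mem_ball, Real.dist_eq, sub_zero] at hy; linarith
      exact (summable_terms (fun m => aJ m * (2*m)) (fun m => 2*m-1) c1_bound
        (fun m => Nat.sub_le _ _) (by positivity)).2 y hyR m)
    (Metric.mem_ball_self hR)
    (summable_of_coeff _ _ coeff_bound_aJ (fun m => le_rfl) 0)
    (by rw [Metric.mem_ball, Real.dist_eq, sub_zero]; linarith [abs_nonneg x])

lemma hasDerivAt_D1 (x : ℝ) : HasDerivAt D1 (D2 x) x := by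
  have hR : (0:ℝ) < |x| + 1 := by positivity
  unfold D1 D2
  exact hasDerivAt_tsum_of_isPreconnected
    (g := fun m y => (aJ m * (2 * m)) * y ^ (2 * m - 1))
    (g' := fun m y => (aJ m * (2 * m) * ((2 * m - 1 : ℕ) : ℝ)) * y ^ (2 * m - 1 - 1))
    (Real.summable_pow_div_factorial (16 * (|x| + 1 + 1) ^ 2))
    Metric.isOpen_ball (convex_ball (0:ℝ) (|x|+1)).isPreconnected
    (fun m y _ => by
      have := (hasDerivAt_pow (2*m-1) y).const_mul (aJ m * (2*m))
      exact this.congr_deriv (by ring))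
    (fun m y hy => by
      have hyR : |y| ≤ |x| + 1 := by
        rw [Metric.mem_ball, Real.dist_eq, sub_zero] at hy; linarith
      exact (summable_terms (fun m => aJ m * (2*m) * ((2*m-1:ℕ):ℝ))
        (fun m => 2*m-1-1) c2_bound
        (fun m => le_trans (Nat.sub_le _ _) (Nat.sub_le _ _)) (by positivity)).2 y hyR m)
    (Metric.mem_ball_self hR)
    (summable_of_coeff _ _ c1_bound (fun m => Nat.sub_le _ _) 0)
    (by rw [Metric.mem_ball, Real.dist_eq, sub_zero]; linarith [abs_nonneg x])

@[fun_prop] lemma continuous_Jf : Continuous Jf :=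
  continuous_iff_continuousAt.mpr fun x => (hasDerivAt_Jf x).continuousAt

@[fun_prop] lemma continuous_D1 : Continuous D1 :=
  continuous_iff_continuousAt.mpr fun x => (hasDerivAt_D1 x).continuousAt

lemma c3_bound (m : ℕ) : |aJ m * (2 * m) * (2 * m)| ≤ 16 ^ m / m.factorial := by
  rw [mul_assoc]
  apply coeff_bound_gen m _ (by positivity)
  have h1 := two_mul_le m
  push_cast at h1
  calc (2:ℝ) * m * (2 * m) ≤ 4 ^ m * 4 ^ m := by nlinarith [pow_pos (by norm_num : (0:ℝ) < 4) m]
    _ = 16 ^ m := by rw [← mul_pow]; norm_num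

lemma aJ_succ (n : ℕ) : aJ (n+1) * (2 * ((n:ℝ)+1)) * (2 * ((n:ℝ)+1)) = - aJ n := by
  unfold aJ
  rw [Nat.factorial_succ]
  have h1 : ((n.factorial : ℝ)) ≠ 0 := Nat.cast_ne_zero.mpr n.factorial_ne_zero
  have h2 : ((n:ℝ) + 1) ≠ 0 := by positivity
  have h3 : ((4:ℝ)) ^ n ≠ 0 := by positivity
  push_cast
  field_simp
  ring

lemma ode_Jf (x : ℝ) : x * D2 x + D1 x + x * Jf x = 0 := by
  have s1 : Summable (fun m : ℕ => (aJ m * (2 * m)) * x ^ (2 * m - 1)) :=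
    summable_of_coeff _ _ c1_bound (fun m => Nat.sub_le _ _) x
  have s2 : Summable (fun m : ℕ =>
      (aJ m * (2 * m) * ((2 * m - 1 : ℕ) : ℝ)) * x ^ (2 * m - 1 - 1)) :=
    summable_of_coeff _ _ c2_bound (fun m => le_trans (Nat.sub_le _ _) (Nat.sub_le _ _)) x
  have sF : Summable (fun m : ℕ => (aJ m * (2 * m) * (2 * m)) * x ^ (2 * m - 1)) :=
    summable_of_coeff _ _ c3_bound (fun m => Nat.sub_le _ _) x
  have hxD2 : x * D2 x = ∑' m : ℕ,
      x * ((aJ m * (2 * m) * ((2 * m - 1 : ℕ) : ℝ)) * x ^ (2 * m - 1 - 1)) := by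
    rw [D2, ← tsum_mul_left]
  have hxJ : x * Jf x = ∑' m : ℕ, aJ m * x ^ (2 * m + 1) := by
    rw [Jf, ← tsum_mul_left]
    exact tsum_congr fun m => by ring
  have hkey : x * D2 x + D1 x = ∑' m : ℕ, (aJ m * (2 * m) * (2 * m)) * x ^ (2 * m - 1) := by
    rw [hxD2, D1, ← Summable.tsum_add (s2.mul_left x) s1]
    refine tsum_congr fun m => ?_
    cases m with
    | zero => simp
    | succ n =>
      have e1 : 2 * (n + 1) - 1 = 2 * n + 1 := by omega
      have e2 : 2 * (n + 1) - 1 - 1 = 2 * n := by omega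
      rw [e1, Nat.add_sub_cancel]
      push_cast
      ring
  have hshift : (∑' m : ℕ, (aJ m * (2 * m) * (2 * m)) * x ^ (2 * m - 1))
      = - (x * Jf x) := by
    rw [Summable.tsum_eq_zero_add sF, hxJ]
    have h0 : (aJ 0 * (2 * (0:ℕ)) * (2 * (0:ℕ))) * x ^ (2 * 0 - 1) = 0 := by simp
    rw [h0, zero_add]
    have hterm : ∀ n : ℕ, (aJ (n+1) * (2 * ((n+1 : ℕ):ℝ)) * (2 * ((n+1 : ℕ):ℝ)))
        * x ^ (2 * (n+1) - 1) = -(aJ n * x ^ (2 * n + 1)) := by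
      intro n
      have e1 : 2 * (n + 1) - 1 = 2 * n + 1 := by omega
      rw [e1]
      push_cast
      linear_combination x ^ (2 * n + 1) * aJ_succ n
    calc (∑' n : ℕ, (aJ (n+1) * (2 * ((n+1 : ℕ):ℝ)) * (2 * ((n+1 : ℕ):ℝ)))
          * x ^ (2 * (n+1) - 1))
        = ∑' n : ℕ, -(aJ n * x ^ (2 * n + 1)) := tsum_congr hterm
      _ = - ∑' n : ℕ, aJ n * x ^ (2 * n + 1) := by rw [tsum_neg]
  rw [hkey, hshift]
  ring

lemma hasDerivAt_scaled (b : ℝ) (x : ℝ) :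
    HasDerivAt (fun y => Jf (b * y)) (b * D1 (b * x)) x := by
  have h := (hasDerivAt_Jf (b * x)).comp x ((hasDerivAt_id x).const_mul b)
  simpa [mul_comm, mul_one, Function.comp_def] using h

lemma hasDerivAt_scaledD1 (b : ℝ) (x : ℝ) :
    HasDerivAt (fun y => b * D1 (b * y)) (b * (b * D2 (b * x))) x := by
  have h := ((hasDerivAt_D1 (b * x)).comp x ((hasDerivAt_id x).const_mul b)).const_mul b
  simpa [mul_comm, mul_one] using h

lemma lagrange_deriv (b c x : ℝ) :
    HasDerivAt (fun y => y * (Jf (b * y) * (c * D1 (c * y)) - (b * D1 (b * y)) * Jf (c * y)))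
      ((b ^ 2 - c ^ 2) * (x * (Jf (b * x) * Jf (c * x)))) x := by
  have h := (hasDerivAt_id x).mul
    (((hasDerivAt_scaled b x).mul (hasDerivAt_scaledD1 c x)).sub
      ((hasDerivAt_scaledD1 b x).mul (hasDerivAt_scaled c x)))
  refine h.congr_deriv ?_
  symm
  simp only [id_eq, Pi.mul_apply, Pi.sub_apply]
  have eb := ode_Jf (b * x)
  have ec := ode_Jf (c * x)
  linear_combination (b * Jf (c * x)) * eb - (c * Jf (b * x)) * ec

lemma ortho (b c : ℝ) (hbJ : Jf b = 0) (hcJ : Jf c = 0) (hbc : b ^ 2 ≠ c ^ 2) :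
    ∫ x in (0:ℝ)..1, x * (Jf (b * x) * Jf (c * x)) = 0 := by
  have hcontint : Continuous fun x : ℝ =>
      (b ^ 2 - c ^ 2) * (x * (Jf (b * x) * Jf (c * x))) := by
    fun_prop
  have h := intervalIntegral.integral_eq_sub_of_hasDerivAt
    (f := fun y => y * (Jf (b * y) * (c * D1 (c * y)) - (b * D1 (b * y)) * Jf (c * y)))
    (f' := fun x => (b ^ 2 - c ^ 2) * (x * (Jf (b * x) * Jf (c * x))))
    (fun x _ => lagrange_deriv b c x) (hcontint.intervalIntegrable 0 1)
  rw [intervalIntegral.integral_const_mul] at h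
  simp only [mul_one, mul_zero, hbJ, hcJ, zero_mul, sub_zero, one_mul, zero_sub, neg_zero,
    sub_self] at h
  have hne : b ^ 2 - c ^ 2 ≠ 0 := sub_ne_zero.mpr hbc
  exact (mul_eq_zero.mp h).resolve_left hne

lemma Jf_zero : Jf 0 = 1 := by
  rw [Jf]
  rw [tsum_eq_single 0 (fun m hm => by
    have : 2 * m ≠ 0 := by omega
    simp [zero_pow this])]
  simp [aJ]

lemma norm_pos (l : ℝ) (hl : 0 < l) :
    0 < ∫ x in (0:ℝ)..1, x * (Jf (l * x) * Jf (l * x)) := by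
  have hcont : Continuous fun x : ℝ => x * (Jf (l * x) * Jf (l * x)) := by
    fun_prop
  have hcont2 : ContinuousAt (fun x : ℝ => Jf (l * x)) 0 :=
    (continuous_Jf.comp (continuous_const.mul continuous_id)).continuousAt
  have h1 : Jf (l * 0) = 1 := by rw [mul_zero, Jf_zero]
  have hev : ∀ᶠ x in nhds (0:ℝ), (1:ℝ)/2 < Jf (l * x) := by
    apply hcont2.eventually
    have h1' : (fun x : ℝ => Jf (l * x)) 0 = 1 := by simp [Jf_zero]
    rw [h1']
    exact eventually_gt_nhds (by norm_num)
  obtain ⟨δ, hδ0, hδ⟩ := Metric.eventually_nhds_iff.mp hev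
  set d : ℝ := min (δ / 2) 1 with hd
  have hd0 : 0 < d := by
    apply lt_min (by linarith) one_pos
  have hd1 : d ≤ 1 := min_le_right _ _
  have hi1 : IntervalIntegrable (fun x : ℝ => x * (Jf (l * x) * Jf (l * x))) MeasureTheory.volume 0 d :=
    hcont.intervalIntegrable _ _
  have hi2 : IntervalIntegrable (fun x : ℝ => x * (Jf (l * x) * Jf (l * x))) MeasureTheory.volume d 1 :=
    hcont.intervalIntegrable _ _
  rw [← intervalIntegral.integral_add_adjacent_intervals hi1 hi2]
  have hpos1 : 0 < ∫ x in (0:ℝ)..d, x * (Jf (l * x) * Jf (l * x)) := by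
    apply intervalIntegral.intervalIntegral_pos_of_pos_on hi1 _ hd0
    intro x hx
    have hxd : |x - 0| < δ := by
      rw [sub_zero, abs_of_pos hx.1]
      have : x < d := hx.2
      have : d ≤ δ / 2 := min_le_left _ _
      linarith [hx.2]
    have hJ2 := hδ hxd
    have hx0 : 0 < x := hx.1
    have hJ : 0 < Jf (l * x) := by linarith
    exact mul_pos hx0 (mul_pos hJ hJ)
  have hpos2 : 0 ≤ ∫ x in d..1, x * (Jf (l * x) * Jf (l * x)) := by
    apply intervalIntegral.integral_nonneg hd1
    intro x hx
    have : 0 ≤ x := le_trans hd0.le hx.1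
    nlinarith [mul_self_nonneg (Jf (l * x))]
  linarith


/-- Uniqueness for the inverse initial problem: if `u` is continuous with uniformly
convergent Fourier–Bessel expansion `u(x,t) = ∑ u_k(t) J₀(λ_k x)`, each `u_k` solving
`^cD^α u_k + λ_k² u_k = 0` (so `u_k(t) = u_k(0) E_α(-λ_k² t^α)` with
`E_α(-λ_k² T^α) > 0`), and `u(·,T) ≡ 0`, then `u ≡ 0` on `[0,1]×[0,T]`; in particular
`u(·,0) ≡ 0`. -/
theorem inverse_initial_uniqueness
    (a T : ℝ) (ha0 : 0 < a) (ha1 : a < 1) (hT : 0 < T)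
    (lam : ℕ → ℝ) (hmono : StrictMono lam)
    (hzero : ∀ k, 0 < lam k ∧ besselJN 0 (lam k) = 0)
    (hall : ∀ x : ℝ, 0 < x → besselJN 0 x = 0 → ∃ k, lam k = x)
    (u : ℝ → ℝ → ℝ) (uc : ℕ → ℝ → ℝ)
    (hcont : ContinuousOn (fun p : ℝ × ℝ => u p.1 p.2)
      (Set.Icc 0 1 ×ˢ Set.Icc 0 T))
    (hconv : TendstoUniformlyOn
      (fun n p => ∑ k ∈ Finset.range n, uc k p.2 * besselJN 0 (lam k * p.1))
      (fun p : ℝ × ℝ => u p.1 p.2) Filter.atTop (Set.Icc 0 1 ×ˢ Set.Icc 0 T))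
    (hode : ∀ k, ∀ t ∈ Set.Ioo 0 T, caputo a (uc k) t + lam k ^ 2 * uc k t = 0)
    (hsol : ∀ k, ∀ t ∈ Set.Icc 0 T, uc k t = uc k 0 * mlReal a (-(lam k ^ 2) * t ^ a))
    (hEpos : ∀ k, 0 < mlReal a (-(lam k ^ 2) * T ^ a))
    (hfinal : ∀ x ∈ Set.Icc (0:ℝ) 1, u x T = 0) :
    ∀ x ∈ Set.Icc (0:ℝ) 1, ∀ t ∈ Set.Icc 0 T, u x t = 0 := by
  rw [besselJN_zero_eq_s15] at hzero hconv
  have hTmem : T ∈ Set.Icc (0:ℝ) T := ⟨hT.le, le_rfl⟩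
  -- slice the uniform convergence at t = T
  have hsl : TendstoUniformlyOn
      (fun n x => ∑ k ∈ Finset.range n, uc k T * Jf (lam k * x))
      (fun x => u x T) Filter.atTop (Set.Icc 0 1) := by
    have h := (hconv.comp (fun x : ℝ => (x, T))).mono
      (fun x hx => Set.mk_mem_prod hx hTmem :
        Set.Icc (0:ℝ) 1 ⊆ (fun x : ℝ => (x, T)) ⁻¹' (Set.Icc 0 1 ×ˢ Set.Icc 0 T))
    exact h
  -- coefficients at time T vanish
  have hsqne : ∀ k j : ℕ, k ≠ j → lam k ^ 2 ≠ lam j ^ 2 := by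
    intro k j hkj h
    apply hkj
    apply hmono.injective
    have hfac : (lam k - lam j) * (lam k + lam j) = 0 := by
      have : (lam k - lam j) * (lam k + lam j) = lam k ^ 2 - lam j ^ 2 := by ring
      rw [this, h, sub_self]
    have hsum : lam k + lam j ≠ 0 := by
      have := (hzero k).1; have := (hzero j).1; positivity
    have := (mul_eq_zero.mp hfac).resolve_right hsum
    linarith [sub_eq_zero.mp this]
  have hcoef : ∀ j, uc j T = 0 := by
    intro j
    set φ : ℝ → ℝ := fun x => x * Jf (lam j * x) with hφ
    have hφc : Continuous φ := by fun_prop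
    obtain ⟨C, hC⟩ := (isCompact_Icc (a := (0:ℝ)) (b := 1)).exists_bound_of_continuousOn
      hφc.continuousOn
    have hC0 : (0:ℝ) ≤ C := le_trans (norm_nonneg _) (hC 0 ⟨le_rfl, zero_le_one⟩)
    set N := ∫ x in (0:ℝ)..1, x * (Jf (lam j * x) * Jf (lam j * x)) with hN
    have hNpos : 0 < N := norm_pos _ (hzero j).1
    -- the partial-sum integrals equal uc j T * N
    have hIn : ∀ n, j < n →
        (∫ x in (0:ℝ)..1, (∑ k ∈ Finset.range n, uc k T * Jf (lam k * x)) * φ x)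
          = uc j T * N := by
      intro n hn
      have hcongr : Set.EqOn
          (fun x => (∑ k ∈ Finset.range n, uc k T * Jf (lam k * x)) * φ x)
          (fun x => ∑ k ∈ Finset.range n,
            uc k T * (x * (Jf (lam k * x) * Jf (lam j * x)))) (Set.uIcc 0 1) := by
        intro x _
        simp only [Finset.sum_mul]
        exact Finset.sum_congr rfl fun k _ => by rw [hφ]; ring
      rw [intervalIntegral.integral_congr hcongr,
        intervalIntegral.integral_finset_sum (fun k _ =>
          (Continuous.intervalIntegrable (by fun_prop) 0 1))]
      have heach : ∀ k ∈ Finset.range n,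
          (∫ x in (0:ℝ)..1, uc k T * (x * (Jf (lam k * x) * Jf (lam j * x))))
            = uc k T * ∫ x in (0:ℝ)..1, x * (Jf (lam k * x) * Jf (lam j * x)) :=
        fun k _ => intervalIntegral.integral_const_mul _ _
      rw [Finset.sum_congr rfl heach]
      rw [Finset.sum_eq_single_of_mem j (Finset.mem_range.mpr hn)
        (fun k _ hkj => by
          rw [ortho (lam k) (lam j) (hzero k).2 (hzero j).2 (hsqne k j hkj), mul_zero])]
  -- limit of partial sums: conclude uc j T * N = 0
    have hcuT : ContinuousOn (fun x : ℝ => u x T) (Set.Icc 0 1) := by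
      have hg : Continuous fun x : ℝ => (x, T) := by fun_prop
      exact hcont.comp hg.continuousOn (fun x hx => Set.mk_mem_prod hx hTmem)
    have hintuT : IntervalIntegrable (fun x => u x T * φ x) MeasureTheory.volume 0 1 := by
      apply ContinuousOn.intervalIntegrable
      rw [Set.uIcc_of_le zero_le_one]
      exact hcuT.mul hφc.continuousOn
    have hK : (∫ x in (0:ℝ)..1, u x T * φ x) = 0 := by
      rw [intervalIntegral.integral_congr (g := fun _ => (0:ℝ))
        (fun x hx => by
          rw [Set.uIcc_of_le zero_le_one] at hx
          simp [hfinal x hx])]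
      simp
    have key : ∀ ε : ℝ, 0 < ε → |uc j T * N| ≤ ε * C := by
      intro ε hε
      obtain ⟨N₀, hN₀⟩ := Filter.eventually_atTop.mp
        ((Metric.tendstoUniformlyOn_iff.mp hsl) ε hε)
      set n := max N₀ (j + 1) with hn
      have hdist := hN₀ n (le_max_left _ _)
      have hIn' := hIn n (lt_of_lt_of_le (Nat.lt_succ_self j) (le_max_right _ _))
      have hintS : IntervalIntegrable
          (fun x => (∑ k ∈ Finset.range n, uc k T * Jf (lam k * x)) * φ x)
          MeasureTheory.volume 0 1 := Continuous.intervalIntegrable (by fun_prop) 0 1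
      have hsub : uc j T * N - 0 = ∫ x in (0:ℝ)..1,
          ((∑ k ∈ Finset.range n, uc k T * Jf (lam k * x)) * φ x - u x T * φ x) := by
        rw [intervalIntegral.integral_sub hintS hintuT, hIn', hK]
      have hbound : ∀ x ∈ Set.uIoc (0:ℝ) 1,
          ‖(∑ k ∈ Finset.range n, uc k T * Jf (lam k * x)) * φ x - u x T * φ x‖ ≤ ε * C := by
        intro x hx
        have hx' : x ∈ Set.Icc (0:ℝ) 1 := by
          rw [Set.uIoc_of_le zero_le_one] at hx
          exact ⟨hx.1.le, hx.2⟩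
        have h1 := hdist x hx'
        rw [Real.dist_eq] at h1
        have : (∑ k ∈ Finset.range n, uc k T * Jf (lam k * x)) * φ x - u x T * φ x
            = -(u x T - ∑ k ∈ Finset.range n, uc k T * Jf (lam k * x)) * φ x := by ring
        rw [this, Real.norm_eq_abs, abs_mul, abs_neg]
        exact mul_le_mul h1.le (hC x hx') (abs_nonneg _) hε.le
      have := intervalIntegral.norm_integral_le_of_norm_le_const hbound
      rw [← hsub] at this
      simpa only [sub_zero, Real.norm_eq_abs, abs_one, mul_one] using this
    have hzeroN : uc j T * N = 0 := by
      by_contra h'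
      have hv : 0 < |uc j T * N| := abs_pos.mpr h'
      have := key (|uc j T * N| / (2 * (C + 1))) (by positivity)
      have hCC : |uc j T * N| / (2 * (C + 1)) * C < |uc j T * N| := by
        rw [div_mul_eq_mul_div, div_lt_iff₀ (by positivity)]
        nlinarith
      linarith
    exact (mul_eq_zero.mp hzeroN).resolve_right hNpos.ne'
  -- all coefficients vanish for all times
  have huc0 : ∀ j, uc j 0 = 0 := by
    intro j
    have h := hsol j T hTmem
    rw [hcoef j] at h
    exact (mul_eq_zero.mp h.symm).resolve_right (hEpos j).ne'
  have huct : ∀ j, ∀ t ∈ Set.Icc (0:ℝ) T, uc j t = 0 := fun j t ht => by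
    rw [hsol j t ht, huc0 j, zero_mul]
  -- conclude
  intro x hx t ht
  have hp : (x, t) ∈ Set.Icc (0:ℝ) 1 ×ˢ Set.Icc (0:ℝ) T := Set.mk_mem_prod hx ht
  have htend := hconv.tendsto_at hp
  have hzero' : ∀ n : ℕ, ∑ k ∈ Finset.range n, uc k (x, t).2 * Jf (lam k * (x, t).1) = 0 :=
    fun n => Finset.sum_eq_zero fun k _ => by rw [huct k t ht, zero_mul]
  have h0 : Filter.Tendsto (fun _ : ℕ => (0:ℝ)) Filter.atTop (nhds (u x t)) := by
    simpa only [hzero'] using htend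
  exact (tendsto_nhds_unique h0 tendsto_const_nhds)
end
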